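/- arXiv:1211.1004 — 5 statements merged into one kernel-verified Lean document; each statement's English description precedes it below -/
import Mathlib

section
/- Every formal power series in n variables over a commutative ring B with constant term 1 can be written uniquely as a (convergent) product over all nonzero multi-indices I in Z_{\geq 0}^n of factors (1 - a_I t^I) with a_I in B. -/
open Finset MvPowerSeries

/-- The (convergent) infinite product `∏_{I ∈ ℤ_{≥0}^n - 0} (1 - a_I t^I)` in
`B[[t_1,…,t_n]]`: its coefficient at a multi-index `M` agrees with the coefficient at `M`
of the finite partial product over the nonzero multi-indices `I ≤ M`, since factors with
`I ≰ M` do not contribute in degree `M`. -/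
noncomputable def wittFactorProd {n : ℕ} {B : Type*} [CommRing B]
    (a : (Fin n →₀ ℕ) → B) : MvPowerSeries (Fin n) B :=
  fun M => MvPowerSeries.coeff (R := B) M
    (∏ I ∈ (Finset.Iic M).erase 0, (1 - MvPowerSeries.monomial (R := B) I (a I)))

section Aux
variable {n : ℕ} {B : Type*} [CommRing B]


lemma constCoeff_partial (a : (Fin n →₀ ℕ) → B) (S : Finset (Fin n →₀ ℕ)) (hS : (0:Fin n →₀ ℕ) ∉ S) :
    constantCoeff (∏ I ∈ S, (1 - monomial I (a I))) = 1 := by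
  rw [map_prod]
  apply Finset.prod_eq_one
  intro I hI
  rw [map_sub, map_one, ← coeff_zero_eq_constantCoeff_apply, coeff_monomial,
    if_neg (by rintro rfl; exact hS hI), sub_zero]

lemma coeff_wittFactorProd (a : (Fin n →₀ ℕ) → B) (M : Fin n →₀ ℕ) (hM : M ≠ 0) :
    coeff M (wittFactorProd a)
      = coeff M (∏ I ∈ (Finset.Iio M).erase 0, (1 - monomial I (a I))) - a M := by
  have h1 : (Finset.Iic M).erase 0 = insert M ((Finset.Iio M).erase 0) := by
    ext I
    simp only [Finset.mem_erase, Finset.mem_Iic, Finset.mem_insert, Finset.mem_Iio]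
    constructor
    · rintro ⟨hI0, hIM⟩
      rcases eq_or_lt_of_le hIM with rfl | h
      · exact Or.inl rfl
      · exact Or.inr ⟨hI0, h⟩
    · rintro (rfl | ⟨hI0, h⟩)
      · exact ⟨hM, le_rfl⟩
      · exact ⟨hI0, h.le⟩
  have h2 : M ∉ (Finset.Iio M).erase 0 := fun h => absurd (Finset.mem_of_mem_erase h) (by simp)
  have h0 : coeff M (wittFactorProd a)
      = coeff M (∏ I ∈ (Finset.Iic M).erase 0, (1 - monomial I (a I))) := rfl
  rw [h0, h1, Finset.prod_insert h2, sub_mul, one_mul, map_sub, coeff_monomial_mul, if_pos le_rfl,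
    tsub_self, coeff_zero_eq_constantCoeff_apply,
    constCoeff_partial a _ (Finset.notMem_erase _ _), mul_one]

lemma coeff_zero_wittFactorProd (a : (Fin n →₀ ℕ) → B) :
    constantCoeff (wittFactorProd a) = 1 := by
  have h0 : constantCoeff (wittFactorProd a)
      = coeff 0 (∏ I ∈ (Finset.Iic (0 : Fin n →₀ ℕ)).erase 0, (1 - monomial I (a I))) := rfl
  have he : (Finset.Iic (0 : Fin n →₀ ℕ)).erase 0 = ∅ := by
    simp [Finset.eq_empty_iff_forall_notMem, le_zero_iff]
  rw [h0, he, Finset.prod_empty, coeff_zero_eq_constantCoeff_apply, map_one]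

noncomputable def solA (f : MvPowerSeries (Fin n) B) : (Fin n →₀ ℕ) → B
  | M =>
    if hM : M = 0 then 0 else
      MvPowerSeries.coeff M (∏ I ∈ ((Finset.Iio M).erase 0).attach,
        (1 - MvPowerSeries.monomial I.1 (solA f I.1))) - MvPowerSeries.coeff M f
  termination_by M => M
  decreasing_by exact Finset.mem_Iio.mp (Finset.mem_of_mem_erase I.2)

lemma solA_spec (f : MvPowerSeries (Fin n) B) (M : Fin n →₀ ℕ) (hM : M ≠ 0) :
    solA f M = coeff M (∏ I ∈ (Finset.Iio M).erase 0, (1 - monomial I (solA f I)))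
      - coeff M f := by
  rw [solA, dif_neg hM, Finset.prod_attach ((Finset.Iio M).erase 0)
    (fun I => 1 - monomial I (solA f I))]

lemma solA_zero (f : MvPowerSeries (Fin n) B) : solA f 0 = 0 := by
  rw [solA, dif_pos rfl]

lemma aM_eq (a : (Fin n →₀ ℕ) → B) (M : Fin n →₀ ℕ) (hM : M ≠ 0) :
    a M = coeff M (∏ I ∈ (Finset.Iio M).erase 0, (1 - monomial I (a I)))
      - coeff M (wittFactorProd a) := by
  rw [coeff_wittFactorProd a M hM]; ring

end Aux

/-- Every formal power series in `n` variables over a commutative ring `B` with constant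
term `1` can be written uniquely as a product over all nonzero multi-indices
`I ∈ ℤ_{≥0}^n - 0` of factors `(1 - a_I t^I)` with `a_I ∈ B`. -/
theorem unique_product_decomposition {n : ℕ} {B : Type*} [CommRing B]
    (f : MvPowerSeries (Fin n) B) (hf : MvPowerSeries.constantCoeff (σ := Fin n) (R := B) f = 1) :
    ∃! a : (Fin n →₀ ℕ) → B, a 0 = 0 ∧ wittFactorProd a = f := by
  refine ⟨solA f, ⟨solA_zero f, ?_⟩, ?_⟩
  · apply MvPowerSeries.ext
    intro M
    by_cases hM : M = 0
    · subst hM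
      rw [coeff_zero_eq_constantCoeff_apply, coeff_zero_eq_constantCoeff_apply,
        coeff_zero_wittFactorProd, hf]
    · rw [coeff_wittFactorProd _ M hM, solA_spec f M hM]; ring
  · rintro b ⟨hb0, hbf⟩
    funext M
    refine wellFounded_lt.induction (C := fun M => b M = solA f M) M ?_
    intro M ih
    by_cases hM : M = 0
    · subst hM; rw [hb0, solA_zero]
    · rw [aM_eq b M hM, hbf, solA_spec f M hM]
      congr 2
      apply Finset.prod_congr rfl
      intro I hI
      rw [ih I (Finset.mem_Iio.mp (Finset.mem_of_mem_erase hI))]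
end

section
/- Every formal power series in one variable over a commutative ring B with constant term 1 can be written uniquely as a product over m >= 1 of factors (1 - a_m t^m) with a_m in B. -/
open Finset

noncomputable def wittProdOne {B : Type*} [CommRing B] (a : ℕ → B) : PowerSeries B :=
  PowerSeries.mk fun d => PowerSeries.coeff (R := B) d
    (∏ m ∈ Finset.Icc 1 d, (1 - PowerSeries.monomial (R := B) m (a m)))

section Aux
variable {B : Type*} [CommRing B]

lemma witt_dvd_sub_one (a : ℕ → B) (d : ℕ) (s : Finset ℕ) (hs : ∀ m ∈ s, d < m) :
    (PowerSeries.X : PowerSeries B) ^ (d + 1) ∣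
      (∏ m ∈ s, (1 - PowerSeries.monomial (R := B) m (a m))) - 1 := by
  refine Finset.prod_induction _ (fun q => (PowerSeries.X : PowerSeries B) ^ (d+1) ∣ q - 1)
    (fun q r hq hr => ?_) (by simp) (fun m hm => ?_)
  · show (PowerSeries.X : PowerSeries B) ^ (d+1) ∣ q * r - 1
    have h : q * r - 1 = q * (r - 1) + (q - 1) := by ring
    rw [h]
    exact dvd_add (Dvd.dvd.mul_left hr q) hq
  · show (PowerSeries.X : PowerSeries B) ^ (d+1) ∣ (1 - PowerSeries.monomial (R := B) m (a m)) - 1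
    have h : (1 - PowerSeries.monomial (R := B) m (a m)) - 1 = -(PowerSeries.monomial (R := B) m (a m)) := by
      ring
    rw [h, PowerSeries.X_pow_dvd_iff]
    intro j hj
    rw [map_neg, PowerSeries.coeff_monomial]
    have : j ≠ m := by have := hs m hm; omega
    simp [this]

lemma witt_coeff_prod_Icc (a : ℕ → B) {d N : ℕ} (h : d ≤ N) :
    PowerSeries.coeff (R := B) d (∏ m ∈ Icc 1 N, (1 - PowerSeries.monomial (R := B) m (a m))) =
    PowerSeries.coeff (R := B) d (∏ m ∈ Icc 1 d, (1 - PowerSeries.monomial (R := B) m (a m))) := by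
  classical
  have hsplit : Icc 1 N = Icc 1 d ∪ Icc (d+1) N := by
    ext x; simp only [mem_Icc, mem_union]; omega
  have hdisj : Disjoint (Icc 1 d) (Icc (d+1) N) := by
    simp only [Finset.disjoint_left, mem_Icc]; omega
  rw [hsplit, Finset.prod_union hdisj]
  set P := ∏ m ∈ Icc 1 d, (1 - PowerSeries.monomial (R := B) m (a m)) with hP
  set Q := ∏ m ∈ Icc (d+1) N, (1 - PowerSeries.monomial (R := B) m (a m)) with hQ
  have hdvd : (PowerSeries.X : PowerSeries B) ^ (d+1) ∣ Q - 1 :=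
    witt_dvd_sub_one a d _ (fun m hm => (mem_Icc.mp hm).1)
  have hPQ : P * Q = P + P * (Q - 1) := by ring
  rw [hPQ, map_add]
  have hz : PowerSeries.coeff (R := B) d (P * (Q - 1)) = 0 := by
    have : (PowerSeries.X : PowerSeries B) ^ (d+1) ∣ P * (Q - 1) := Dvd.dvd.mul_left hdvd P
    exact (PowerSeries.X_pow_dvd_iff.mp this) d (by omega)
  rw [hz, add_zero]

lemma witt_constantCoeff_prod (a : ℕ → B) (s : Finset ℕ) (hs : ∀ m ∈ s, 1 ≤ m) :
    PowerSeries.constantCoeff (R := B) (∏ m ∈ s, (1 - PowerSeries.monomial (R := B) m (a m))) = 1 := by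
  rw [map_prod]
  refine Finset.prod_eq_one fun m hm => ?_
  have h1 : (0 : ℕ) ≠ m := by have := hs m hm; omega
  rw [map_sub, map_one, ← PowerSeries.coeff_zero_eq_constantCoeff_apply,
    PowerSeries.coeff_monomial]
  simp [h1]

lemma witt_coeff_succ (a : ℕ → B) (d : ℕ) :
    PowerSeries.coeff (R := B) (d+1) (wittProdOne a) =
    PowerSeries.coeff (R := B) (d+1) (∏ m ∈ Icc 1 d, (1 - PowerSeries.monomial (R := B) m (a m)))
      - a (d+1) := by
  have h0 : PowerSeries.coeff (R := B) (d+1) (wittProdOne a) =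
      PowerSeries.coeff (R := B) (d+1) (∏ m ∈ Icc 1 (d+1), (1 - PowerSeries.monomial (R := B) m (a m))) := by
    simp [wittProdOne]
  rw [h0, Finset.prod_Icc_succ_top (by omega)]
  set P := ∏ m ∈ Icc 1 d, (1 - PowerSeries.monomial (R := B) m (a m)) with hP
  have hexp : P * (1 - PowerSeries.monomial (R := B) (d+1) (a (d+1))) =
      P - P * PowerSeries.monomial (R := B) (d+1) (a (d+1)) := by ring
  rw [hexp, map_sub]
  congr 1
  have hmon : PowerSeries.monomial (R := B) (d+1) (a (d+1)) =
      PowerSeries.C (R := B) (a (d+1)) * PowerSeries.X ^ (d+1) := by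
    ext j
    rw [PowerSeries.coeff_monomial, PowerSeries.coeff_C_mul_X_pow]
  rw [hmon, ← mul_assoc]
  have := PowerSeries.coeff_mul_X_pow (P * PowerSeries.C (R := B) (a (d+1))) (d+1) 0
  rw [zero_add] at this
  rw [this, PowerSeries.coeff_zero_eq_constantCoeff_apply, map_mul,
    witt_constantCoeff_prod a _ (fun m hm => (mem_Icc.mp hm).1),
    PowerSeries.constantCoeff_C, one_mul]

/-- Recursively defined candidate coefficients. -/
noncomputable def wittInv (f : PowerSeries B) : ℕ → B
  | d =>
    PowerSeries.coeff (R := B) d (∏ m ∈ (Icc 1 (d-1)).attach,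
      (1 - PowerSeries.monomial (R := B) m.1 (wittInv f m.1))) - PowerSeries.coeff (R := B) d f
  decreasing_by
    have := Finset.mem_Icc.mp m.2; omega

lemma wittInv_eq (f : PowerSeries B) (d : ℕ) :
    wittInv f d =
      PowerSeries.coeff (R := B) d (∏ m ∈ Icc 1 (d-1),
        (1 - PowerSeries.monomial (R := B) m (wittInv f m))) - PowerSeries.coeff (R := B) d f := by
  rw [wittInv]
  congr 1
  rw [← Finset.prod_attach (Icc 1 (d-1)) (fun m => 1 - PowerSeries.monomial (R := B) m (wittInv f m))]

end Aux

/-- Every formal power series in one variable over a commutative ring `B` with constant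
term `1` can be written uniquely as a product over `m ≥ 1` of factors `(1 - a_m t^m)`
with `a_m ∈ B`. -/
theorem unique_product_decomposition_one_var {B : Type*} [CommRing B]
    (f : PowerSeries B) (hf : PowerSeries.constantCoeff (R := B) f = 1) :
    ∃! a : ℕ → B, a 0 = 0 ∧ wittProdOne a = f := by
  refine ⟨wittInv f, ⟨?_, ?_⟩, ?_⟩
  · -- a 0 = 0
    rw [wittInv_eq]
    simp [PowerSeries.coeff_zero_eq_constantCoeff_apply, hf]
  · -- product equals f
    ext d
    cases d with
    | zero =>
        simp [wittProdOne, PowerSeries.coeff_zero_eq_constantCoeff_apply, hf]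
    | succ e =>
        rw [witt_coeff_succ]
        have := wittInv_eq f (e+1)
        simp only [Nat.add_sub_cancel] at this
        rw [this]
        ring
  · -- uniqueness
    rintro b ⟨hb0, hbf⟩
    funext d
    induction d using Nat.strong_induction_on with
    | _ d ih =>
      cases d with
      | zero =>
          rw [hb0, wittInv_eq]
          simp [PowerSeries.coeff_zero_eq_constantCoeff_apply, hf]
      | succ e =>
          have hcoeff : PowerSeries.coeff (R := B) (e+1) (wittProdOne b) = PowerSeries.coeff (R := B) (e+1) f := by
            rw [hbf]
          rw [witt_coeff_succ] at hcoeff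
          have hprod : (∏ m ∈ Icc 1 e, (1 - PowerSeries.monomial (R := B) m (b m))) =
              ∏ m ∈ Icc 1 e, (1 - PowerSeries.monomial (R := B) m (wittInv f m)) := by
            refine Finset.prod_congr rfl fun m hm => ?_
            rw [ih m (by have := (mem_Icc.mp hm).2; omega)]
          rw [hprod] at hcoeff
          have := wittInv_eq f (e+1)
          simp only [Nat.add_sub_cancel] at this
          rw [this]
          linear_combination -hcoeff
end

section
/- In one variable: the dual of the coalgebra R[[t]]^* (free R-module with basis b_i dual to t^i, comultiplication b_i -> sum_{j=0}^{i} b_j tensor b_{i-j}) has its free commutative Hopf algebra F(R[[t]]^*) isomorphic as an R-algebra to the polynomial ring R[b_1, b_2, ...], and R-algebra homomorphisms from it to a commutative R-algebra B are in natural bijection with power series in B[[t]] with constant term 1. -/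
/-- The free commutative Hopf algebra `F(R[[t]]^*)` on the restricted dual coalgebra of
`R[[t]]` is, as an `R`-algebra, the polynomial ring `R[b_1, b_2, …]` (here
`MvPolynomial {i : ℕ // 0 < i} R`), and `R`-algebra homomorphisms from it to a
commutative `R`-algebra `B` are in natural bijection with power series in `B[[t]]` with
constant term `1`: there is an equivalence sending `φ` to the power series
`1 + ∑_{i ≥ 1} φ(b_i) t^i`. -/
theorem polynomial_ring_represents_power_series (R B : Type*) [CommRing R] [CommRing B]
    [Algebra R B] :
    ∃ e : (MvPolynomial {i : ℕ // 0 < i} R →ₐ[R] B) ≃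
        {f : PowerSeries B // PowerSeries.constantCoeff (R := B) f = 1},
      ∀ (φ : MvPolynomial {i : ℕ // 0 < i} R →ₐ[R] B) (i : ℕ) (hi : 0 < i),
        PowerSeries.coeff (R := B) i (e φ).1 = φ (MvPolynomial.X ⟨i, hi⟩) := by
  refine ⟨{
    toFun := fun φ => ⟨PowerSeries.mk (fun n => if h : 0 < n then φ (MvPolynomial.X ⟨n, h⟩)
      else 1), by rw [← PowerSeries.coeff_zero_eq_constantCoeff]; simp⟩
    invFun := fun f => MvPolynomial.aeval (fun i => PowerSeries.coeff (R := B) i.1 f.1)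
    left_inv := fun φ => by
      apply MvPolynomial.algHom_ext
      intro i
      simp [i.2]
    right_inv := fun f => by
      ext n
      rcases Nat.eq_zero_or_pos n with h | h
      · simp [h, f.2]
      · simp [h.ne', h] }, ?_⟩
  intro φ i hi
  simp [hi]
end

section
/- For a commutative ring B, the bijection between R-algebra maps R[b_1,b_2,...] -> B and power series 1 + sum_{i>=1} b_i t^i in B[[t]] intertwines the comultiplication b_i -> sum_{0<=j<=i} b_j tensor b_{i-j} (with b_0 = 1) with multiplication of power series; i.e., the Hopf algebra R[b_1,b_2,...] with this comultiplication represents the functor B -> (group of power series over B with constant term 1 under multiplication). -/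
open Finset TensorProduct

/-- The elements `b_i` of the Hopf algebra `R[b_1, b_2, …]`, with `b_0 = 1`. -/
noncomputable def bb (R : Type*) [CommRing R] (i : ℕ) : MvPolynomial {i : ℕ // 0 < i} R :=
  if h : 0 < i then MvPolynomial.X ⟨i, h⟩ else 1

/-- The comultiplication of the big Witt Hopf algebra: the `R`-algebra map determined by
`b_i ↦ ∑_{j=0}^{i} b_j ⊗ b_{i-j}` (with `b_0 = 1`). -/
noncomputable def wittComul (R : Type*) [CommRing R] :
    MvPolynomial {i : ℕ // 0 < i} R →ₐ[R]
      MvPolynomial {i : ℕ // 0 < i} R ⊗[R] MvPolynomial {i : ℕ // 0 < i} R :=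
  MvPolynomial.aeval fun i =>
    ∑ j ∈ Finset.range (i.1 + 1), bb R j ⊗ₜ[R] bb R (i.1 - j)

/-- The power series `1 + ∑_{i ≥ 1} φ(b_i) t^i` attached to an algebra map
`φ : R[b_1, b_2, …] → B`. -/
noncomputable def seriesOf {R B : Type*} [CommRing R] [CommRing B] [Algebra R B]
    (φ : MvPolynomial {i : ℕ // 0 < i} R →ₐ[R] B) : PowerSeries B :=
  PowerSeries.mk fun i => if h : 0 < i then φ (MvPolynomial.X ⟨i, h⟩) else 1

lemma coeff_seriesOf {R B : Type*} [CommRing R] [CommRing B] [Algebra R B]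
    (φ : MvPolynomial {i : ℕ // 0 < i} R →ₐ[R] B) (n : ℕ) :
    PowerSeries.coeff n (seriesOf φ) = φ (bb R n) := by
  simp only [seriesOf, PowerSeries.coeff_mk, bb]
  split <;> simp

/-- The bijection between `R`-algebra maps `R[b_1, b_2, …] → B` and power series with
constant term `1` intertwines the comultiplication `b_i ↦ ∑_{0 ≤ j ≤ i} b_j ⊗ b_{i-j}`
(with `b_0 = 1`) with multiplication of power series: the Hopf algebra `R[b_1, b_2, …]`
represents the functor `B ↦ (power series over B with constant term 1, under ×)`. -/
theorem wittComul_intertwines_mul {R B : Type*} [CommRing R] [CommRing B] [Algebra R B]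
    (φ ψ : MvPolynomial {i : ℕ // 0 < i} R →ₐ[R] B) :
    seriesOf ((Algebra.TensorProduct.productMap φ ψ).comp (wittComul R)) =
      seriesOf φ * seriesOf ψ := by
  ext n
  rw [PowerSeries.coeff_mul, coeff_seriesOf]
  simp only [coeff_seriesOf]
  rcases Nat.eq_zero_or_pos n with rfl | hn
  · simp [bb]
  · rw [bb, dif_pos hn]
    simp only [AlgHom.coe_comp, Function.comp_apply, wittComul, MvPolynomial.aeval_X,
      map_sum, Algebra.TensorProduct.productMap_apply_tmul]
    rw [Finset.Nat.sum_antidiagonal_eq_sum_range_succ fun i j => φ (bb R i) * ψ (bb R j)]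
end

section
/- The n-dimensional Witt polynomials are primitive: in the Hopf algebra R[a_I : I in Z_{\geq 0}^n - {0}] with comultiplication determined by multiplication of products prod_I (1 - a_I t^I), for each nonzero multi-index I the element w_I = sum_{kJ = I} gcd(J) a_J^k satisfies Delta(w_I) = w_I tensor 1 + 1 tensor w_I. -/
open Finset

/-- The greatest common divisor of the nonzero entries of a multi-index. -/
def mgcd {n : ℕ} (I : Fin n →₀ ℕ) : ℕ := Finset.univ.gcd fun i => I i

/-- The ghost component `w_I(a) = ∑_{kJ = I, k ≥ 1} gcd(J) a_J^k`. -/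
noncomputable def ghostMap {n : ℕ} {B : Type*} [CommRing B]
    (a : (Fin n →₀ ℕ) → B) (I : Fin n →₀ ℕ) : B :=
  ∑ p ∈ ((Finset.Icc 1 (I.sum fun _ m => m)) ×ˢ Finset.Iic I).filter
      (fun p => p.1 • p.2 = I),
    (mgcd p.2 : B) * a p.2 ^ p.1

namespace WittAux

open MvPowerSeries

variable {n : ℕ} {B : Type*} [CommRing B]

/-- total degree of a multi-index -/
def deg {n : ℕ} (M : Fin n →₀ ℕ) : ℕ := M.sum fun _ m => m

lemma apply_le_deg (M : Fin n →₀ ℕ) (j : Fin n) : M j ≤ deg M := by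
  by_cases hj : j ∈ M.support
  · exact Finset.single_le_sum (fun i _ => Nat.zero_le (M i)) hj
  · simp [Finsupp.notMem_support_iff.mp hj]

lemma deg_zero : deg (0 : Fin n →₀ ℕ) = 0 := by simp [deg]

lemma le_smul {J : Fin n →₀ ℕ} {k : ℕ} (hk : 1 ≤ k) : J ≤ k • J := by
  rw [Finsupp.le_def]
  intro i
  rw [Finsupp.smul_apply, smul_eq_mul]
  exact Nat.le_mul_of_pos_left _ hk

lemma smul_inj {J : Fin n →₀ ℕ} (hJ : J ≠ 0) {k l : ℕ} (h : k • J = l • J) : k = l := by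
  obtain ⟨j, hj⟩ := Finsupp.ne_iff.mp hJ
  simp only [Finsupp.coe_zero, Pi.zero_apply] at hj
  have h2 := DFunLike.congr_fun h j
  simp only [Finsupp.smul_apply, smul_eq_mul] at h2
  exact Nat.eq_of_mul_eq_mul_right (Nat.pos_of_ne_zero hj) h2

/-- the operator `t_i ∂_i`, diagonal in the monomial basis -/
noncomputable def Dop (i : Fin n) (f : MvPowerSeries (Fin n) B) : MvPowerSeries (Fin n) B :=
  fun M => (M i : B) * MvPowerSeries.coeff (R := B) M f

lemma coeff_Dop (i : Fin n) (f : MvPowerSeries (Fin n) B) (M : Fin n →₀ ℕ) :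
    MvPowerSeries.coeff (R := B) M (Dop i f) = (M i : B) * MvPowerSeries.coeff (R := B) M f := rfl

lemma Dop_mul (i : Fin n) (f g : MvPowerSeries (Fin n) B) :
    Dop i (f * g) = Dop i f * g + f * Dop i g := by
  classical
  ext M
  rw [coeff_Dop, map_add, MvPowerSeries.coeff_mul, MvPowerSeries.coeff_mul,
    MvPowerSeries.coeff_mul, Finset.mul_sum, ← Finset.sum_add_distrib]
  refine Finset.sum_congr rfl fun p hp => ?_
  rw [Finset.HasAntidiagonal.mem_antidiagonal] at hp
  rw [coeff_Dop, coeff_Dop]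
  have : (M i : B) = (p.1 i : B) + (p.2 i : B) := by
    rw [← hp]
    push_cast [Finsupp.add_apply]
    ring
  rw [this]; ring

lemma Dop_sub (i : Fin n) (f g : MvPowerSeries (Fin n) B) :
    Dop i (f - g) = Dop i f - Dop i g := by
  ext M
  rw [coeff_Dop, map_sub, map_sub, coeff_Dop, coeff_Dop, mul_sub]

lemma Dop_one (i : Fin n) : Dop i (1 : MvPowerSeries (Fin n) B) = 0 := by
  classical
  ext M
  rw [coeff_Dop, MvPowerSeries.coeff_one, map_zero]
  split_ifs with h
  · subst h; simp
  · simp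

lemma Dop_monomial (i : Fin n) (J : Fin n →₀ ℕ) (x : B) :
    Dop i (monomial (R := B) J x) = monomial (R := B) J ((J i : B) * x) := by
  classical
  ext M
  rw [coeff_Dop, MvPowerSeries.coeff_monomial, MvPowerSeries.coeff_monomial]
  split_ifs with h
  · subst h; rfl
  · exact mul_zero _


/-- the geometric-type series `∑_{k ≥ 1} x^k t^{kJ}` -/
noncomputable def geom (J : Fin n →₀ ℕ) (x : B) : MvPowerSeries (Fin n) B :=
  fun M => ∑ k ∈ Finset.Icc 1 (deg M), if k • J = M then x ^ k else 0

lemma coeff_geom (J : Fin n →₀ ℕ) (x : B) (M : Fin n →₀ ℕ) :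
    MvPowerSeries.coeff (R := B) M (geom J x) =
      ∑ k ∈ Finset.Icc 1 (deg M), if k • J = M then x ^ k else 0 := rfl

lemma geom_apply_of_forall {J M : Fin n →₀ ℕ} {x : B} (h : ∀ k, 1 ≤ k → M ≠ k • J) :
    MvPowerSeries.coeff (R := B) M (geom J x) = 0 := by
  rw [coeff_geom]
  refine Finset.sum_eq_zero fun k hk => ?_
  rw [if_neg]
  exact fun hkJ => h k (Finset.mem_Icc.mp hk).1 hkJ.symm

lemma geom_apply_smul {J : Fin n →₀ ℕ} (hJ : J ≠ 0) (x : B) {k : ℕ} (hk : 1 ≤ k) :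
    MvPowerSeries.coeff (R := B) (k • J) (geom J x) = x ^ k := by
  obtain ⟨j, hj⟩ := Finsupp.ne_iff.mp hJ
  simp only [Finsupp.coe_zero, Pi.zero_apply] at hj
  have hmem : k ∈ Finset.Icc 1 (deg (k • J)) := by
    refine Finset.mem_Icc.mpr ⟨hk, ?_⟩
    calc k ≤ k * J j := Nat.le_mul_of_pos_right _ (Nat.pos_of_ne_zero hj)
      _ = (k • J) j := by rw [Finsupp.smul_apply, smul_eq_mul]
      _ ≤ deg (k • J) := apply_le_deg _ _
  rw [coeff_geom, Finset.sum_eq_single_of_mem k hmem]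
  · rw [if_pos rfl]
  · intro l _ hlk
    rw [if_neg]
    exact fun h => hlk (smul_inj hJ h)

lemma one_sub_mul_geom {J : Fin n →₀ ℕ} (hJ : J ≠ 0) (x : B) :
    (1 - monomial (R := B) J x) * geom J x = monomial (R := B) J x := by
  classical
  ext M
  rw [sub_mul, one_mul, map_sub, MvPowerSeries.coeff_monomial_mul, MvPowerSeries.coeff_monomial]
  by_cases hex : ∃ k, 1 ≤ k ∧ M = k • J
  · obtain ⟨k, hk1, rfl⟩ := hex
    rw [geom_apply_smul hJ x hk1, if_pos (le_smul hk1)]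
    have hsub : k • J - J = (k - 1) • J := by
      ext a
      rw [Finsupp.tsub_apply, Finsupp.smul_apply, Finsupp.smul_apply, smul_eq_mul, smul_eq_mul,
        Nat.sub_one_mul]
    rcases eq_or_lt_of_le hk1 with h1 | h2
    · cases h1
      have : (1 - 1) • J = (0 : Fin n →₀ ℕ) := by simp
      rw [hsub, this, if_pos (one_smul ℕ J), geom_apply_of_forall, mul_zero, sub_zero, pow_one]
      intro l hl hMl
      rw [eq_comm, smul_eq_zero] at hMl
      rcases hMl with h | h
      · omega
      · exact hJ h
    · rw [hsub, geom_apply_smul hJ x (by omega), if_neg, sub_eq_zero]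
      · conv_lhs => rw [show k = 1 + (k - 1) by omega, pow_add, pow_one]
      · intro hkJ
        have : k • J = 1 • J := by rw [one_smul]; exact hkJ
        have := smul_inj hJ this
        omega
  · push_neg at hex
    rw [geom_apply_of_forall hex,
      if_neg (show M ≠ J from fun h => hex 1 le_rfl (by simpa using h))]
    by_cases hle : J ≤ M
    · rw [if_pos hle, geom_apply_of_forall (x := x), mul_zero, sub_zero]
      intro l hl hMl
      refine hex (l + 1) (by omega) ?_
      rw [add_smul, one_smul, ← hMl, tsub_add_cancel_of_le hle]
    · rw [if_neg hle, sub_zero]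


section Trunc
variable (x : (Fin n →₀ ℕ) → B)

lemma coeff_prod_mul_of_not_le (N : Fin n →₀ ℕ) :
    ∀ S : Finset (Fin n →₀ ℕ), (∀ J ∈ S, ¬ J ≤ N) → ∀ g : MvPowerSeries (Fin n) B,
      MvPowerSeries.coeff (R := B) N ((∏ J ∈ S, (1 - monomial (R := B) J (x J))) * g) =
        MvPowerSeries.coeff (R := B) N g := by
  classical
  intro S
  induction S using Finset.induction_on with
  | empty => intro _ g; rw [Finset.prod_empty, one_mul]
  | @insert J S hJ IH =>
    intro hS g
    rw [Finset.prod_insert hJ, mul_assoc, sub_mul, one_mul, map_sub,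
      MvPowerSeries.coeff_monomial_mul, if_neg (hS _ (Finset.mem_insert_self _ _)), sub_zero,
      IH (fun J hJs => hS _ (Finset.mem_insert_of_mem hJs)) g]

lemma coeff_prod_filter (S : Finset (Fin n →₀ ℕ)) (N : Fin n →₀ ℕ) :
    MvPowerSeries.coeff (R := B) N (∏ J ∈ S, (1 - monomial (R := B) J (x J))) =
      MvPowerSeries.coeff (R := B) N (∏ J ∈ S.filter (· ≤ N), (1 - monomial (R := B) J (x J))) := by
  classical
  rw [← Finset.prod_filter_mul_prod_filter_not S (· ≤ N), mul_comm]
  exact coeff_prod_mul_of_not_le x N _ (fun J hJ => (Finset.mem_filter.mp hJ).2) _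

end Trunc

lemma wittFactorProd_coeff (x : (Fin n →₀ ℕ) → B) {N M : Fin n →₀ ℕ} (hNM : N ≤ M) :
    MvPowerSeries.coeff (R := B) N (wittFactorProd x) =
      MvPowerSeries.coeff (R := B) N
        (∏ J ∈ (Finset.Iic M).erase 0, (1 - MvPowerSeries.monomial (R := B) J (x J))) := by
  classical
  have h1 : MvPowerSeries.coeff (R := B) N (wittFactorProd x) =
      MvPowerSeries.coeff (R := B) N
        (∏ J ∈ (Finset.Iic N).erase 0, (1 - MvPowerSeries.monomial (R := B) J (x J))) := rfl
  rw [h1, coeff_prod_filter x ((Finset.Iic N).erase 0) N,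
    coeff_prod_filter x ((Finset.Iic M).erase 0) N]
  have hset : ((Finset.Iic N).erase 0).filter (· ≤ N) =
      ((Finset.Iic M).erase 0).filter (· ≤ N) := by
    ext J
    simp only [Finset.mem_filter, Finset.mem_erase, Finset.mem_Iic]
    constructor
    · rintro ⟨⟨h0, hN⟩, h⟩; exact ⟨⟨h0, le_trans hN hNM⟩, h⟩
    · rintro ⟨⟨h0, _⟩, h⟩; exact ⟨⟨h0, h⟩, h⟩
  rw [hset]

lemma Dop_prod (ha : (Fin n →₀ ℕ) → B) (i : Fin n) :
    ∀ S : Finset (Fin n →₀ ℕ), (0 : Fin n →₀ ℕ) ∉ S →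
      Dop i (∏ J ∈ S, (1 - monomial (R := B) J (ha J))) =
        -((∏ J ∈ S, (1 - monomial (R := B) J (ha J))) *
          ∑ J ∈ S, MvPowerSeries.C (σ := Fin n) (R := B) (J i : B) * geom J (ha J)) := by
  classical
  intro S
  induction S using Finset.induction_on with
  | empty => intro _; simp [Dop_one]
  | @insert J S hJ IH =>
    intro h0
    have hJ0 : J ≠ 0 := fun h => h0 (h ▸ Finset.mem_insert_self J S)
    have h0S : (0 : Fin n →₀ ℕ) ∉ S := fun h => h0 (Finset.mem_insert_of_mem h)
    rw [Finset.prod_insert hJ, Finset.sum_insert hJ, Dop_mul, IH h0S]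
    have hD : Dop i (1 - monomial (R := B) J (ha J)) =
        -(MvPowerSeries.C (σ := Fin n) (R := B) (J i : B) * monomial (R := B) J (ha J)) := by
      rw [Dop_sub, Dop_one, Dop_monomial, zero_sub]
      congr 1
      rw [show (MvPowerSeries.C (σ := Fin n) (R := B)) ((J i : B)) = monomial (R := B) 0 ((J i : B)) from rfl,
        MvPowerSeries.monomial_mul_monomial, zero_add]
    rw [hD]
    have hgeom := one_sub_mul_geom hJ0 (ha J)
    set F := ∏ J ∈ S, (1 - monomial (R := B) J (ha J))
    set G := ∑ J ∈ S, MvPowerSeries.C (σ := Fin n) (R := B) (J i : B) * geom J (ha J)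
    set m := monomial (R := B) J (ha J)
    set g := geom J (ha J)
    set r := MvPowerSeries.C (σ := Fin n) (R := B) (J i : B)
    linear_combination (F * r) * hgeom

/-- the series whose coefficient at `Q` is `∑_{kJ = Q} J_i a_J^k` -/
noncomputable def Gser (i : Fin n) (x : (Fin n →₀ ℕ) → B) : MvPowerSeries (Fin n) B :=
  fun Q => ∑ p ∈ ((Finset.Icc 1 (Q.sum fun _ m => m)) ×ˢ Finset.Iic Q).filter
      (fun p => p.1 • p.2 = Q), (p.2 i : B) * x p.2 ^ p.1

lemma coeff_Gser (i : Fin n) (x : (Fin n →₀ ℕ) → B) (Q : Fin n →₀ ℕ) :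
    MvPowerSeries.coeff (R := B) Q (Gser i x) =
      ∑ p ∈ ((Finset.Icc 1 (Q.sum fun _ m => m)) ×ˢ Finset.Iic Q).filter
        (fun p => p.1 • p.2 = Q), (p.2 i : B) * x p.2 ^ p.1 := rfl

lemma coeff_Gsum {M Q : Fin n →₀ ℕ} (hQ : Q ≤ M) (i : Fin n) (x : (Fin n →₀ ℕ) → B) :
    MvPowerSeries.coeff (R := B) Q (∑ J ∈ (Finset.Iic M).erase 0,
        MvPowerSeries.C (σ := Fin n) (R := B) (J i : B) * geom J (x J)) =
      MvPowerSeries.coeff (R := B) Q (Gser i x) := by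
  classical
  rw [map_sum]
  simp only [MvPowerSeries.coeff_C_mul, coeff_geom, Finset.mul_sum, mul_ite, mul_zero]
  rw [coeff_Gser, Finset.sum_filter, Finset.sum_product, Finset.sum_comm]
  refine Finset.sum_congr (by unfold deg; rfl) fun k hk => ?_
  have hk' : k ∈ Finset.Icc 1 (deg Q) := by unfold deg; exact hk
  rw [Finset.mem_Icc] at hk'
  have h1 : ∀ J ∈ (Finset.Iic M).erase 0 ∪ Finset.Iic Q, J ∉ (Finset.Iic M).erase 0 →
      (if k • J = Q then (J i : B) * x J ^ k else 0) = 0 := by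
    intro J hJu hJn
    rw [if_neg]
    intro hkJ
    have hJQ : J ≤ Q := hkJ ▸ le_smul hk'.1
    have hJ0 : J ≠ 0 := by
      rintro rfl
      rw [smul_zero] at hkJ
      rw [← hkJ] at hk'
      simp [deg_zero] at hk'
      omega
    exact hJn (Finset.mem_erase.mpr ⟨hJ0, Finset.mem_Iic.mpr (le_trans hJQ hQ)⟩)
  have h2 : ∀ J ∈ (Finset.Iic M).erase 0 ∪ Finset.Iic Q, J ∉ Finset.Iic Q →
      (if k • J = Q then (J i : B) * x J ^ k else 0) = 0 := by
    intro J hJu hJn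
    rw [if_neg]
    intro hkJ
    exact hJn (Finset.mem_Iic.mpr (hkJ ▸ le_smul hk'.1))
  rw [Finset.sum_subset Finset.subset_union_left h1,
    Finset.sum_subset Finset.subset_union_right h2]

lemma Dop_wittFactorProd (x : (Fin n →₀ ℕ) → B) (i : Fin n) :
    Dop i (wittFactorProd x) = -(wittFactorProd x * Gser i x) := by
  classical
  ext M
  have hprod := congrArg (MvPowerSeries.coeff (R := B) M)
    (Dop_prod x i ((Finset.Iic M).erase 0) (fun h => (Finset.mem_erase.mp h).1 rfl))
  rw [coeff_Dop, map_neg] at hprod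
  rw [coeff_Dop, map_neg]
  have hW : MvPowerSeries.coeff (R := B) M (wittFactorProd x) =
      MvPowerSeries.coeff (R := B) M
        (∏ J ∈ (Finset.Iic M).erase 0, (1 - MvPowerSeries.monomial (R := B) J (x J))) := rfl
  rw [hW, hprod]
  congr 1
  rw [MvPowerSeries.coeff_mul, MvPowerSeries.coeff_mul]
  refine Finset.sum_congr rfl fun p hp => ?_
  rw [Finset.HasAntidiagonal.mem_antidiagonal] at hp
  have h1 : p.1 ≤ M := hp ▸ le_add_right le_rfl
  have h2 : p.2 ≤ M := hp ▸ le_add_left le_rfl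
  rw [← wittFactorProd_coeff x h1, coeff_Gsum h2 i x]

lemma bezout {ι : Type*} [DecidableEq ι] (s : Finset ι) (f : ι → ℕ) :
    ∃ u : ι → ℤ, ∑ i ∈ s, u i * (f i : ℤ) = ((s.gcd f : ℕ) : ℤ) := by
  induction s using Finset.induction_on with
  | empty => exact ⟨0, by simp⟩
  | @insert x s hx IH =>
    obtain ⟨u, hu⟩ := IH
    refine ⟨fun i => if i = x then Nat.gcdA (f x) (s.gcd f)
      else Nat.gcdB (f x) (s.gcd f) * u i, ?_⟩
    rw [Finset.sum_insert hx, Finset.gcd_insert]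
    beta_reduce
    rw [if_pos rfl]
    have hrest : ∑ i ∈ s, (if i = x then Nat.gcdA (f x) (s.gcd f)
        else Nat.gcdB (f x) (s.gcd f) * u i) * (f i : ℤ) =
        Nat.gcdB (f x) (s.gcd f) * ∑ i ∈ s, u i * (f i : ℤ) := by
      rw [Finset.mul_sum]
      exact Finset.sum_congr rfl fun i hi => by
        rw [if_neg (ne_of_mem_of_not_mem hi hx)]; ring
    rw [hrest, hu, gcd_eq_nat_gcd, Nat.gcd_eq_gcd_ab]
    ring

lemma mgcd_smul (k : ℕ) (J : Fin n →₀ ℕ) : mgcd (k • J) = k * mgcd J := by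
  unfold mgcd
  have h : (fun i => (k • J) i) = fun i => k * J i := by
    funext i; rw [Finsupp.smul_apply, smul_eq_mul]
  rw [h, Finset.gcd_mul_left, normalize_eq]

end WittAux

/-- The `n`-dimensional Witt polynomials `w_I = ∑_{kJ = I} gcd(J) a_J^k` are primitive
in the Hopf algebra `R[a_I : I ∈ ℤ_{≥0}^n - 0]` with comultiplication determined by
multiplication of the products `∏_I (1 - a_I t^I)`.  Equivalently (the formulation
below), the ghost components are additive: for every commutative ring `B`, if
`∏ (1 - c_I t^I) = ∏ (1 - a_I t^I) · ∏ (1 - b_I t^I)` in `B[[t_1,…,t_n]]` then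
`w_I(c) = w_I(a) + w_I(b)` for every nonzero multi-index `I`. -/
theorem witt_polynomials_primitive {n : ℕ} {B : Type*} [CommRing B]
    (a b c : (Fin n →₀ ℕ) → B)
    (h : wittFactorProd c = wittFactorProd a * wittFactorProd b) :
    ∀ I : Fin n →₀ ℕ, I ≠ 0 → ghostMap c I = ghostMap a I + ghostMap b I := by
  classical
  have hW0 : MvPowerSeries.constantCoeff (σ := Fin n) (R := B) (wittFactorProd c) = 1 := by
    rw [← MvPowerSeries.coeff_zero_eq_constantCoeff_apply]
    have h1 : MvPowerSeries.coeff (R := B) 0 (wittFactorProd c) =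
        MvPowerSeries.coeff (R := B) 0 (∏ J ∈ (Finset.Iic (0 : Fin n →₀ ℕ)).erase 0,
          (1 - MvPowerSeries.monomial (R := B) J (c J))) := rfl
    have h2 : (Finset.Iic (0 : Fin n →₀ ℕ)).erase 0 = ∅ := by
      ext J
      simp only [Finset.mem_erase, Finset.mem_Iic, Finset.notMem_empty, iff_false, not_and]
      intro hJ0 hle
      exact hJ0 (le_antisymm hle (Finsupp.le_def.mpr fun i => Nat.zero_le _))
    rw [h1, h2, Finset.prod_empty, MvPowerSeries.coeff_one]
    simp
  have hinv := MvPowerSeries.invOfUnit_mul (wittFactorProd c) 1 (by rw [hW0, Units.val_one])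
  have key : ∀ i : Fin n, WittAux.Gser i c = WittAux.Gser i a + WittAux.Gser i b := by
    intro i
    have h1 : -(wittFactorProd c * WittAux.Gser i c) =
        -(wittFactorProd c * (WittAux.Gser i a + WittAux.Gser i b)) := by
      rw [← WittAux.Dop_wittFactorProd c i, h, WittAux.Dop_mul,
        WittAux.Dop_wittFactorProd a i, WittAux.Dop_wittFactorProd b i]
      ring
    have h2 := neg_injective h1
    calc WittAux.Gser i c
        = (MvPowerSeries.invOfUnit (wittFactorProd c) 1 * wittFactorProd c) *
            WittAux.Gser i c := by rw [hinv, one_mul]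
      _ = MvPowerSeries.invOfUnit (wittFactorProd c) 1 *
            (wittFactorProd c * WittAux.Gser i c) := mul_assoc _ _ _
      _ = MvPowerSeries.invOfUnit (wittFactorProd c) 1 *
            (wittFactorProd c * (WittAux.Gser i a + WittAux.Gser i b)) := by rw [h2]
      _ = (MvPowerSeries.invOfUnit (wittFactorProd c) 1 * wittFactorProd c) *
            (WittAux.Gser i a + WittAux.Gser i b) := (mul_assoc _ _ _).symm
      _ = WittAux.Gser i a + WittAux.Gser i b := by rw [hinv, one_mul]
  intro I hI
  obtain ⟨u, hu⟩ := WittAux.bezout Finset.univ (fun i => I i)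
  set T := ((Finset.Icc 1 (I.sum fun _ m => m)) ×ˢ Finset.Iic I).filter
      (fun p => p.1 • p.2 = I) with hT
  have hgcd : ∀ p ∈ T, ((mgcd p.2 : ℤ)) = ∑ i, u i * (p.2 i : ℤ) := by
    intro p hp
    rw [hT, Finset.mem_filter] at hp
    obtain ⟨hmem, hpI⟩ := hp
    have hk1 : 1 ≤ p.1 := (Finset.mem_Icc.mp (Finset.mem_product.mp hmem).1).1
    have hgcdI : mgcd I = p.1 * mgcd p.2 := by rw [← hpI, WittAux.mgcd_smul]
    have hcalc : (p.1 : ℤ) * (mgcd p.2 : ℤ) = (p.1 : ℤ) * ∑ i, u i * (p.2 i : ℤ) := by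
      rw [Finset.mul_sum]
      have h3 : (p.1 : ℤ) * (mgcd p.2 : ℤ) = (mgcd I : ℤ) := by rw [hgcdI]; push_cast; ring
      have hmgcd : (mgcd I : ℤ) = ((Finset.univ.gcd (fun i => I i) : ℕ) : ℤ) := rfl
      rw [h3, hmgcd, ← hu]
      refine Finset.sum_congr rfl fun i _ => ?_
      have h4 : I i = p.1 * p.2 i := by rw [← hpI, Finsupp.smul_apply, smul_eq_mul]
      rw [h4]; push_cast; ring
    exact mul_left_cancel₀ (Int.natCast_ne_zero.mpr (by omega)) hcalc
  have ghost_eq : ∀ x : (Fin n →₀ ℕ) → B,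
      ghostMap x I = ∑ i, ((u i : ℤ) : B) * ∑ p ∈ T, (p.2 i : B) * x p.2 ^ p.1 := by
    intro x
    have hdef : ghostMap x I = ∑ p ∈ T, (mgcd p.2 : B) * x p.2 ^ p.1 := rfl
    rw [hdef]
    have step1 : ∀ p ∈ T, (mgcd p.2 : B) * x p.2 ^ p.1 =
        ∑ i, ((u i : ℤ) : B) * ((p.2 i : B) * x p.2 ^ p.1) := by
      intro p hp
      have hc := congrArg (fun z : ℤ => (z : B)) (hgcd p hp)
      push_cast at hc
      rw [hc, Finset.sum_mul]
      exact Finset.sum_congr rfl fun i _ => by ring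
    rw [Finset.sum_congr rfl step1, Finset.sum_comm]
    exact Finset.sum_congr rfl fun i _ => by rw [Finset.mul_sum]
  have hS : ∀ i : Fin n, (∑ p ∈ T, (p.2 i : B) * c p.2 ^ p.1) =
      (∑ p ∈ T, (p.2 i : B) * a p.2 ^ p.1) + (∑ p ∈ T, (p.2 i : B) * b p.2 ^ p.1) := by
    intro i
    have hkey := congrArg (MvPowerSeries.coeff (R := B) I) (key i)
    rw [map_add] at hkey
    have e : ∀ x : (Fin n →₀ ℕ) → B, MvPowerSeries.coeff (R := B) I (WittAux.Gser i x) =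
        ∑ p ∈ T, (p.2 i : B) * x p.2 ^ p.1 := fun x => rfl
    rw [e c, e a, e b] at hkey
    exact hkey
  rw [ghost_eq a, ghost_eq b, ghost_eq c, ← Finset.sum_add_distrib]
  exact Finset.sum_congr rfl fun i _ => by rw [hS i, mul_add]
end
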